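/- Under the identification of the chain complex of the tensor product of globular groups with the tensor product of their chain complexes (P(G⊗H)_n ≅ ⊕_{i+j=n} PG_i ⊗ PH_j, induced by g ⊗ h ↦ [g] ⊗ [h]), the differential is given by the Koszul rule: ∂([g] ⊗ [h]) = ∂[g] ⊗ [h] + (-1)^i [g] ⊗ ∂[h] for [g] ∈ PG_i, [h] ∈ PH_j. -/

import Mathlib

open scoped TensorProduct

/-- The sign `(-1)^i ε`: `ε` if `i` is even, the opposite sign if `i` is odd. -/
def sflip (i : ℤ) (ε : Bool) : Bool := if Even i then ε else !ε

lemma icc_ins (a : ℤ) (ha : 0 ≤ a) : Finset.Icc 0 a = insert a (Finset.Icc 0 (a-1)) := by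
  ext k; simp; omega

lemma tele {A : Type*} [AddCommGroup A] (F : ℤ → A) :
    ∀ a : ℤ, -1 ≤ a → ∑ k ∈ Finset.Icc 0 a, (F k - F (k-1)) = F a - F (-1) := by
  refine fun a ha => Int.le_induction
    (motive := fun a _ => ∑ k ∈ Finset.Icc 0 a, (F k - F (k-1)) = F a - F (-1))
    (by show ∑ k ∈ Finset.Icc 0 (-1:ℤ), (F k - F (k-1)) = F (-1) - F (-1)
        rw [Finset.Icc_eq_empty (by omega)]; simp) ?_ a ha
  intro b hb ih
  rw [icc_ins _ (by omega), Finset.sum_insert (by simp), show b + 1 - 1 = b by ring, ih]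
  abel

theorem tensor_differential_koszul
    {G H : Type*} [AddCommGroup G] [AddCommGroup H]
    (π : Bool → ℤ → G →+ G) (ρ : Bool → ℤ → H →+ H)
    (hπneg : ∀ (ε : Bool) (k : ℤ), k < 0 → π ε k = 0)
    (hρneg : ∀ (ε : Bool) (k : ℤ), k < 0 → ρ ε k = 0)
    (hπlt : ∀ (ε δ : Bool) (i j : ℤ), i < j → ∀ x, π ε i (π δ j x) = π ε i x)
    (hπle : ∀ (ε δ : Bool) (i j : ℤ), j ≤ i → ∀ x, π ε i (π δ j x) = π δ j x)
    (hρlt : ∀ (ε δ : Bool) (i j : ℤ), i < j → ∀ y, ρ ε i (ρ δ j y) = ρ ε i y)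
    (hρle : ∀ (ε δ : Bool) (i j : ℤ), j ≤ i → ∀ y, ρ ε i (ρ δ j y) = ρ δ j y)
    (hπar : ∀ x : G, ∃ n : ℤ, π true n x = x)
    (hρar : ∀ y : H, ∃ n : ℤ, ρ true n y = y)
    (πT : Bool → ℤ → G ⊗[ℤ] H → G ⊗[ℤ] H)
    (hTadd : ∀ (ε : Bool) (n : ℤ) (a b : G ⊗[ℤ] H),
      πT ε n (a + b) = πT ε n a + πT ε n b)
    (hTdef : ∀ (ε : Bool) (n : ℤ) (g : G) (h : H),
      πT ε n (g ⊗ₜ[ℤ] h) =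
        ∑ᶠ k : ℤ, (π ε k g - π ε (k - 1) g) ⊗ₜ[ℤ] ρ (sflip k ε) (n - k) h)
    (i j : ℤ) (hi : 0 ≤ i) (hj : 0 ≤ j)
    (g : G) (h : H) (hg : π true i g = g) (hh : ρ true j h = h) :
    ∃ w : G ⊗[ℤ] H, πT true (i + j - 2) w = w ∧
      πT true (i + j - 1) (g ⊗ₜ[ℤ] h) - πT false (i + j - 1) (g ⊗ₜ[ℤ] h) =
        (π true (i - 1) g - π false (i - 1) g) ⊗ₜ[ℤ] h +
          ((-1 : ℤ) ^ i.toNat) •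
            (g ⊗ₜ[ℤ] (ρ true (j - 1) h - ρ false (j - 1) h)) + w := by
  -- basic facts
  have hπz : ∀ (ε : Bool) (k : ℤ), k < 0 → ∀ x : G, π ε k x = 0 := fun ε k hk x => by
    rw [hπneg ε k hk]; rfl
  have hρz : ∀ (ε : Bool) (k : ℤ), k < 0 → ∀ y : H, ρ ε k y = 0 := fun ε k hk y => by
    rw [hρneg ε k hk]; rfl
  have hgfix : ∀ (a : ℤ) (x : G), π true a x = x → ∀ (ε : Bool) (k : ℤ), a ≤ k →
      π ε k x = x := by
    intro a x hx ε k hk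
    calc π ε k x = π ε k (π true a x) := by rw [hx]
    _ = π true a x := hπle ε true k a hk x
    _ = x := hx
  have hhfix : ∀ (b : ℤ) (y : H), ρ true b y = y → ∀ (δ : Bool) (m : ℤ), b ≤ m →
      ρ δ m y = y := by
    intro b y hy δ m hm
    calc ρ δ m y = ρ δ m (ρ true b y) := by rw [hy]
    _ = ρ true b y := hρle δ true m b hm y
    _ = y := hy
  have πT0 : ∀ (ε : Bool) (n : ℤ), πT ε n 0 = 0 := by
    intro ε n
    have h2 := hTadd ε n 0 0
    rw [add_zero] at h2
    exact (left_eq_add.mp h2)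
  have πTsub : ∀ (ε : Bool) (n : ℤ) (a b : G ⊗[ℤ] H),
      πT ε n (a - b) = πT ε n a - πT ε n b := by
    intro ε n a b
    have h2 := hTadd ε n (a - b) b
    rw [sub_add_cancel] at h2
    exact eq_sub_of_add_eq h2.symm
  -- key evaluation of πT on an elementary tensor
  have key : ∀ (ε : Bool) (a b n : ℤ), -1 ≤ a → -1 ≤ b → (x : G) → (y : H) →
      π true a x = x → ρ true b y = y →
      πT ε n (x ⊗ₜ[ℤ] y) =
        ∑ k ∈ Finset.Icc 0 a, (π ε k x - π ε (k-1) x) ⊗ₜ[ℤ] ρ (sflip k ε) (n - k) y := by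
    intro ε a b n ha hb x y hx hy
    rw [hTdef]
    refine finsum_eq_sum_of_support_subset _ ?_
    intro k hk
    simp only [Function.mem_support, ne_eq] at hk
    by_contra hmem
    simp only [Finset.coe_Icc, Set.mem_Icc, not_and_or, not_le] at hmem
    apply hk
    rcases hmem with hk0 | hka
    · rw [hπz ε k (by omega), hπz ε (k-1) (by omega), sub_self, TensorProduct.zero_tmul]
    · rw [hgfix a x hx ε k (by omega), hgfix a x hx ε (k-1) (by omega), sub_self,
        TensorProduct.zero_tmul]
  -- πT true n fixes tensors of degree ≤ n
  have fix : ∀ (a b n : ℤ), -1 ≤ a → -1 ≤ b → a + b ≤ n → (x : G) → (y : H) →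
      π true a x = x → ρ true b y = y → πT true n (x ⊗ₜ[ℤ] y) = x ⊗ₜ[ℤ] y := by
    intro a b n ha hb hn x y hx hy
    rw [key true a b n ha hb x y hx hy]
    have : ∀ k ∈ Finset.Icc 0 a,
        (π true k x - π true (k-1) x) ⊗ₜ[ℤ] ρ (sflip k true) (n - k) y
          = (π true k x - π true (k-1) x) ⊗ₜ[ℤ] y := by
      intro k hkm
      rw [hhfix b y hy _ (n - k) (by simp at hkm; omega)]
    rw [Finset.sum_congr rfl this, ← TensorProduct.sum_tmul,
      tele (fun k => π true k x) a ha, hπz true (-1) (by omega), sub_zero, hx]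
  -- the main evaluation at degree i+j-1
  have main : ∀ ε : Bool, πT ε (i + j - 1) (g ⊗ₜ[ℤ] h) =
      (π ε (i-1) g) ⊗ₜ[ℤ] h + (g - π ε (i-1) g) ⊗ₜ[ℤ] (ρ (sflip i ε) (j-1) h) := by
    intro ε
    rw [key ε i j (i+j-1) (by omega) (by omega) g h hg hh,
      icc_ins i hi, Finset.sum_insert (by simp)]
    have h1 : ∀ k ∈ Finset.Icc 0 (i-1),
        (π ε k g - π ε (k-1) g) ⊗ₜ[ℤ] ρ (sflip k ε) (i + j - 1 - k) h
          = (π ε k g - π ε (k-1) g) ⊗ₜ[ℤ] h := by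
      intro k hkm
      rw [hhfix j h hh _ (i + j - 1 - k) (by simp at hkm; omega)]
    rw [Finset.sum_congr rfl h1, ← TensorProduct.sum_tmul,
      tele (fun k => π ε k g) (i-1) (by omega), hπz ε (-1) (by omega), sub_zero,
      hgfix i g hg ε i le_rfl, show i + j - 1 - i = j - 1 by ring]
    abel
  have heq : i = (i.toNat : ℤ) := (Int.toNat_of_nonneg hi).symm
  rcases Int.even_or_odd i with hpar | hpar
  · -- i even
    have hst : sflip i true = true := by simp [sflip, hpar]
    have hsf : sflip i false = false := by simp [sflip, hpar]
    have hpow : ((-1 : ℤ) ^ i.toNat) = 1 := by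
      refine Even.neg_one_pow ?_
      rwa [← Int.even_coe_nat, ← heq]
    refine ⟨(π false (i-1) g) ⊗ₜ[ℤ] (ρ false (j-1) h)
        - (π true (i-1) g) ⊗ₜ[ℤ] (ρ true (j-1) h), ?_, ?_⟩
    · rw [πTsub,
        fix (i-1) (j-1) (i+j-2) (by omega) (by omega) (by omega) _ _
          (hπle true false (i-1) (i-1) le_rfl g) (hρle true false (j-1) (j-1) le_rfl h),
        fix (i-1) (j-1) (i+j-2) (by omega) (by omega) (by omega) _ _
          (hπle true true (i-1) (i-1) le_rfl g) (hρle true true (j-1) (j-1) le_rfl h)]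
    · rw [main true, main false, hst, hsf, hpow, one_smul]
      simp only [TensorProduct.sub_tmul, TensorProduct.tmul_sub]
      abel
  · -- i odd
    have hst : sflip i true = false := by simp [sflip, Int.not_even_iff_odd.mpr hpar]
    have hsf : sflip i false = true := by simp [sflip, Int.not_even_iff_odd.mpr hpar]
    have hpow : ((-1 : ℤ) ^ i.toNat) = -1 := by
      refine Odd.neg_one_pow ?_
      rwa [← Int.odd_coe_nat, ← heq]
    refine ⟨(π false (i-1) g) ⊗ₜ[ℤ] (ρ true (j-1) h)
        - (π true (i-1) g) ⊗ₜ[ℤ] (ρ false (j-1) h), ?_, ?_⟩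
    · rw [πTsub,
        fix (i-1) (j-1) (i+j-2) (by omega) (by omega) (by omega) _ _
          (hπle true false (i-1) (i-1) le_rfl g) (hρle true true (j-1) (j-1) le_rfl h),
        fix (i-1) (j-1) (i+j-2) (by omega) (by omega) (by omega) _ _
          (hπle true true (i-1) (i-1) le_rfl g) (hρle true false (j-1) (j-1) le_rfl h)]
    · rw [main true, main false, hst, hsf, hpow, neg_smul, one_smul]
      simp only [TensorProduct.sub_tmul, TensorProduct.tmul_sub]
      abel
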